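/- Assume k − 1 ≤ LR and fix 1 ≤ j ≤ k. Then MC(π^(j)) ≤ MC(π) for every selected node distribution s with s_0 = 1 and every cluster order π ∈ Π(s) whose unique separate entry is at position j (π_j = 0). In other words, when one separate selected node is fixed at location j, the cluster order produced by Algorithms 1 and 2 minimizes the min-cut. -/

import Mathlib

/-- Relative location `h_π(i) = #{1 ≤ j ≤ i : π j = π i}`. -/
def relLoc (π : ℕ → ℕ) (i : ℕ) : ℕ :=
  ((Finset.Icc 1 i).filter (fun j => π j = π i)).card

/-- Intra-cluster coefficient `a_i(π) = d_I + 1 − h_π(i)` (truncated subtraction). -/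
def aCoef (dI : ℕ) (π : ℕ → ℕ) (i : ℕ) : ℕ :=
  dI + 1 - relLoc π i

/-- Cross-cluster coefficient `b_i(π) = max(0, d_C − (i − h_π(i)))` (truncated subtraction). -/
def bCoef (dC : ℕ) (π : ℕ → ℕ) (i : ℕ) : ℕ :=
  dC - (i - relLoc π i)

/-- Part incoming weight `w_i(π)`: for a separate position (`π i = 0`) it is
`(d_I + d_C + 1 − i)·β_C`, otherwise `a_i(π)·β_I + b_i(π)·β_C`. -/
noncomputable def weight (dI dC : ℕ) (βI βC : ℝ) (π : ℕ → ℕ) (i : ℕ) : ℝ :=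
  if π i = 0 then ((dI + dC + 1 - i : ℕ) : ℝ) * βC
  else (aCoef dI π i : ℝ) * βI + (bCoef dC π i : ℝ) * βC

/-- Min-cut `MC(π) = Σ_{i=1}^k min(α, w_i(π))`. -/
noncomputable def MC (k dI dC : ℕ) (βI βC α : ℝ) (π : ℕ → ℕ) : ℝ :=
  ∑ i ∈ Finset.Icc 1 k, min α (weight dI dC βI βC π i)

/-- A cluster order: a `k`-tuple with entries in `{0, 1, …, L}`. -/
def IsClusterOrder (L k : ℕ) (π : ℕ → ℕ) : Prop :=
  ∀ i, 1 ≤ i → i ≤ k → π i ≤ L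

/-- A selected node distribution `(s_0, s_1, …, s_L)`:
`R ≥ s_1 ≥ s_2 ≥ … ≥ s_L` and `s_0 + s_1 + … + s_L = k`. -/
def IsDist (L R k : ℕ) (s : ℕ → ℕ) : Prop :=
  (∀ i, 1 ≤ i → i + 1 ≤ L → s (i + 1) ≤ s i) ∧
  (∀ i, 1 ≤ i → i ≤ L → s i ≤ R) ∧
  ∑ i ∈ Finset.range (L + 1), s i = k

/-- `π ∈ Π(s)`: `π` is a cluster order with `#{1 ≤ j ≤ k : π j = c} = s c` for all `0 ≤ c ≤ L`. -/
def MemPi (L k : ℕ) (s : ℕ → ℕ) (π : ℕ → ℕ) : Prop :=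
  IsClusterOrder L k π ∧
  ∀ c, c ≤ L → ((Finset.Icc 1 k).filter (fun j => π j = c)).card = s c

/-- Vertical order of distribution `s` (possibly with separate entries, whose positions are
not constrained here):  over the cluster positions (`π i ≠ 0`) in increasing order, relative
locations are nondecreasing, with ties broken by increasing cluster index. -/
def IsVerticalOrder (L k : ℕ) (s : ℕ → ℕ) (π : ℕ → ℕ) : Prop :=
  MemPi L k s π ∧
  ∀ i j, 1 ≤ i → i < j → j ≤ k → π i ≠ 0 → π j ≠ 0 →
    relLoc π i ≤ relLoc π j ∧ (relLoc π i = relLoc π j → π i < π j)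

/-- The distribution `s*` (no separate node): `s*_0 = 0`, `s*_i = R` for `1 ≤ i ≤ ⌊k/R⌋`,
`s*_{⌊k/R⌋+1} = k − ⌊k/R⌋·R`, and `0` beyond. -/
def sStar0 (R k : ℕ) : ℕ → ℕ := fun i =>
  if i = 0 then 0
  else if i ≤ k / R then R
  else if i = k / R + 1 then k - k / R * R
  else 0

/-- The distribution with one separate node: `s_0 = 1`, `s_i = R` for `1 ≤ i ≤ ⌊(k−1)/R⌋`,
`s_{⌊(k−1)/R⌋+1} = (k−1) − ⌊(k−1)/R⌋·R`, and `0` beyond. -/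
def sStar1 (R k : ℕ) : ℕ → ℕ := fun i =>
  if i = 0 then 1
  else if i ≤ (k - 1) / R then R
  else if i = (k - 1) / R + 1 then (k - 1) - (k - 1) / R * R
  else 0

/-- `π^(j)`: the cluster order with exactly one separate entry, located at position `j`,
whose cluster entries form the vertical order of the distribution `sStar1 R k`. -/
def IsPiJ (L R k j : ℕ) (π : ℕ → ℕ) : Prop :=
  π j = 0 ∧ IsVerticalOrder L k (sStar1 R k) π

section Helpers

lemma relLoc_pos (π : ℕ → ℕ) (i : ℕ) (hi : 1 ≤ i) : 1 ≤ relLoc π i := by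
  have h : i ∈ (Finset.Icc 1 i).filter (fun j => π j = π i) := by
    simp [Finset.mem_filter, Finset.mem_Icc, hi]
  exact Finset.card_pos.mpr ⟨i, h⟩

lemma relLoc_le_self (π : ℕ → ℕ) (i : ℕ) : relLoc π i ≤ i := by
  unfold relLoc
  calc ((Finset.Icc 1 i).filter (fun j => π j = π i)).card
      ≤ (Finset.Icc 1 i).card := Finset.card_filter_le _ _
    _ = i := by simp

lemma relLoc_strict (π : ℕ → ℕ) {i i' : ℕ} (h1 : 1 ≤ i) (hlt : i < i') (heq : π i = π i') :
    relLoc π i < relLoc π i' := by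
  unfold relLoc
  have hsub : insert i' ((Finset.Icc 1 i).filter (fun j => π j = π i)) ⊆
      (Finset.Icc 1 i').filter (fun j => π j = π i') := by
    intro x hx
    rcases Finset.mem_insert.mp hx with rfl | hx
    · refine Finset.mem_filter.mpr ⟨Finset.mem_Icc.mpr ⟨by omega, le_refl _⟩, rfl⟩
    · simp only [Finset.mem_filter, Finset.mem_Icc] at hx ⊢
      exact ⟨⟨hx.1.1, le_trans hx.1.2 (le_of_lt hlt)⟩, heq ▸ hx.2⟩
  have hni : i' ∉ (Finset.Icc 1 i).filter (fun j => π j = π i) := by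
    simp only [Finset.mem_filter, Finset.mem_Icc]
    omega
  have h := Finset.card_le_card hsub
  rw [Finset.card_insert_of_notMem hni] at h
  omega

lemma relLoc_le_count (π : ℕ → ℕ) {i k : ℕ} (hik : i ≤ k) :
    relLoc π i ≤ ((Finset.Icc 1 k).filter (fun j => π j = π i)).card := by
  apply Finset.card_le_card
  intro x hx
  simp only [Finset.mem_filter, Finset.mem_Icc] at *
  exact ⟨⟨hx.1.1, hx.1.2.trans hik⟩, hx.2⟩

lemma cap_lemma {α p q p' q' : ℝ} (hqp : q ≤ p) (hq'p' : q' ≤ p') (hq'q : q' ≤ q)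
    (hdiff : p - q ≤ p' - q') : min α p - min α q ≤ min α p' - min α q' := by
  simp only [min_def]
  split_ifs <;> linarith

lemma telescope (g : ℕ → ℝ) : ∀ h : ℕ, 1 ≤ h →
    ∑ v ∈ Finset.Icc 2 h, (g (v - 1) - g v) = g 1 - g h := by
  intro h
  induction h with
  | zero => omega
  | succ n ih =>
    intro _
    rcases Nat.eq_or_lt_of_le (show 1 ≤ n + 1 by omega) with h1 | h1
    · rw [← h1]; simp
    · have hn : 1 ≤ n := by omega
      rw [Finset.sum_Icc_succ_top (by omega : 2 ≤ n + 1), ih hn]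
      simp


lemma sum_big {B U : Finset ℕ} {f : ℕ → ℝ} (hcard : B.card ≤ U.card)
    (hfU : ∀ u ∈ U, 0 ≤ f u)
    (hlt : ∀ b ∈ B, b ∉ U → ∀ u ∈ U, u ∉ B → f b ≤ f u) :
    ∑ b ∈ B, f b ≤ ∑ u ∈ U, f u := by
  classical
  have hBsplit : ∑ b ∈ B, f b = ∑ b ∈ B ∩ U, f b + ∑ b ∈ B \ U, f b :=
    (Finset.sum_inter_add_sum_sdiff B U f).symm
  have hUsplit : ∑ u ∈ U, f u = ∑ u ∈ U ∩ B, f u + ∑ u ∈ U \ B, f u :=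
    (Finset.sum_inter_add_sum_sdiff U B f).symm
  rw [hBsplit, hUsplit, Finset.inter_comm]
  apply add_le_add le_rfl
  have h1 : (B ∩ U).card + (B \ U).card = B.card := Finset.card_inter_add_card_sdiff B U
  have h2 : (U ∩ B).card + (U \ B).card = U.card := Finset.card_inter_add_card_sdiff U B
  have hic : (B ∩ U).card = (U ∩ B).card := by rw [Finset.inter_comm]
  have hcle : (B \ U).card ≤ (U \ B).card := by omega
  by_cases hBe : (B \ U).Nonempty
  · have hUe : (U \ B).Nonempty := by
      apply Finset.card_pos.mp
      exact lt_of_lt_of_le (Finset.card_pos.mpr hBe) hcle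
    set c := (U \ B).inf' hUe f with hc
    have hc0 : 0 ≤ c := by
      obtain ⟨u, hu, he⟩ := Finset.exists_mem_eq_inf' hUe f
      rw [hc, he]
      exact hfU u (Finset.mem_sdiff.mp hu).1
    calc ∑ b ∈ B \ U, f b ≤ (B \ U).card • c := by
          apply Finset.sum_le_card_nsmul
          intro b hb
          apply Finset.le_inf'
          intro u hu
          exact hlt b (Finset.mem_sdiff.mp hb).1 (Finset.mem_sdiff.mp hb).2
            u (Finset.mem_sdiff.mp hu).1 (Finset.mem_sdiff.mp hu).2
      _ ≤ (U \ B).card • c := by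
          rw [nsmul_eq_mul, nsmul_eq_mul]
          exact mul_le_mul_of_nonneg_right (Nat.cast_le.mpr hcle) hc0
      _ ≤ ∑ u ∈ U \ B, f u := by
          apply Finset.card_nsmul_le_sum
          intro u hu
          exact Finset.inf'_le f hu
  · rw [Finset.not_nonempty_iff_eq_empty] at hBe
    rw [hBe, Finset.sum_empty]
    exact Finset.sum_nonneg (fun u hu => hfU u (Finset.mem_sdiff.mp hu).1)

end Helpers
section Helpers2

lemma fiber_count {L k : ℕ} {s π : ℕ → ℕ} (hmem : MemPi L k s π) {c v : ℕ}
    (hcL : c ≤ L) (hv : 1 ≤ v) :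
    ((Finset.Icc 1 k).filter (fun i => π i = c ∧ v ≤ relLoc π i)).card = s c + 1 - v := by
  classical
  set P := (Finset.Icc 1 k).filter (fun i => π i = c) with hP
  have hPcard : P.card = s c := hmem.2 c hcL
  have hinj : Set.InjOn (relLoc π) P := by
    intro a ha b hb hab
    rw [Finset.mem_coe, hP, Finset.mem_filter, Finset.mem_Icc] at ha hb
    by_contra hne
    rcases Nat.lt_or_ge a b with h | h
    · exact absurd hab (Nat.ne_of_lt (relLoc_strict π ha.1.1 h (ha.2.trans hb.2.symm)))
    · have h' : b < a := lt_of_le_of_ne h (Ne.symm hne)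
      exact absurd hab.symm (Nat.ne_of_lt (relLoc_strict π hb.1.1 h' (hb.2.trans ha.2.symm)))
  have himg : P.image (relLoc π) = Finset.Icc 1 (s c) := by
    apply Finset.eq_of_subset_of_card_le
    · intro y hy
      rcases Finset.mem_image.mp hy with ⟨i, hi, rfl⟩
      rw [hP, Finset.mem_filter, Finset.mem_Icc] at hi
      rw [Finset.mem_Icc]
      refine ⟨relLoc_pos π i hi.1.1, ?_⟩
      have h2 := relLoc_le_count π hi.1.2
      rw [hi.2] at h2
      rw [← hPcard, hP]
      exact h2
    · rw [Nat.card_Icc, Finset.card_image_of_injOn hinj, hPcard]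
      omega
  have hT : (Finset.Icc 1 k).filter (fun i => π i = c ∧ v ≤ relLoc π i)
      = P.filter (fun i => v ≤ relLoc π i) := by
    rw [hP, Finset.filter_filter]
  rw [hT]
  have hinj2 : Set.InjOn (relLoc π) (P.filter (fun i => v ≤ relLoc π i)) := by
    apply hinj.mono
    intro x hx
    rw [Finset.mem_coe, Finset.mem_filter] at hx
    exact Finset.mem_coe.mpr hx.1
  rw [← Finset.card_image_of_injOn hinj2]
  have himg2 : (P.filter (fun i => v ≤ relLoc π i)).image (relLoc π)
      = (Finset.Icc 1 (s c)).filter (fun y => v ≤ y) := by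
    rw [← himg]
    ext y
    constructor
    · intro hy
      rcases Finset.mem_image.mp hy with ⟨i, hi, rfl⟩
      rcases Finset.mem_filter.mp hi with ⟨hiP, hiv⟩
      exact Finset.mem_filter.mpr ⟨Finset.mem_image_of_mem _ hiP, hiv⟩
    · intro hy
      rcases Finset.mem_filter.mp hy with ⟨hy1, hy2⟩
      rcases Finset.mem_image.mp hy1 with ⟨i, hiP, rfl⟩
      exact Finset.mem_image.mpr ⟨i, Finset.mem_filter.mpr ⟨hiP, hy2⟩, rfl⟩
  rw [himg2]
  have : (Finset.Icc 1 (s c)).filter (fun y => v ≤ y) = Finset.Icc v (s c) := by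
    ext y
    simp only [Finset.mem_filter, Finset.mem_Icc]
    omega
  rw [this, Nat.card_Icc]

lemma zero_only {L k j : ℕ} {s π : ℕ → ℕ} (hmem : MemPi L k s π) (hs0 : s 0 = 1)
    (hj : j ∈ Finset.Icc 1 k) (hπ0 : π j = 0) :
    ∀ i ∈ Finset.Icc 1 k, π i = 0 → i = j := by
  have h1 : ((Finset.Icc 1 k).filter (fun i => π i = 0)).card = 1 := by
    rw [hmem.2 0 (Nat.zero_le L), hs0]
  rcases Finset.card_eq_one.mp h1 with ⟨a, ha⟩
  have hja : j ∈ (Finset.Icc 1 k).filter (fun i => π i = 0) :=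
    Finset.mem_filter.mpr ⟨hj, hπ0⟩
  rw [ha, Finset.mem_singleton] at hja
  intro i hi hπi
  have hia : i ∈ (Finset.Icc 1 k).filter (fun i => π i = 0) :=
    Finset.mem_filter.mpr ⟨hi, hπi⟩
  rw [ha, Finset.mem_singleton] at hia
  rw [hia, hja]

lemma countA {L k j : ℕ} {s π : ℕ → ℕ} (hmem : MemPi L k s π) (hs0 : s 0 = 1)
    (hj : j ∈ Finset.Icc 1 k) (hπ0 : π j = 0) {v : ℕ} (hv : 1 ≤ v) :
    (((Finset.Icc 1 k).erase j).filter (fun i => v ≤ relLoc π i)).card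
      = ∑ c ∈ Finset.Icc 1 L, (s c + 1 - v) := by
  classical
  have hzero := zero_only hmem hs0 hj hπ0
  have hmemL : ∀ x ∈ ((Finset.Icc 1 k).erase j).filter (fun i => v ≤ relLoc π i),
      π x ∈ Finset.Icc 1 L := by
    intro x hx
    rcases Finset.mem_filter.mp hx with ⟨hx1, _⟩
    have hxj : x ≠ j := Finset.ne_of_mem_erase hx1
    have hxk : x ∈ Finset.Icc 1 k := Finset.mem_of_mem_erase hx1
    rcases Finset.mem_Icc.mp hxk with ⟨hx1', hx2'⟩
    have hne : π x ≠ 0 := fun h => hxj (hzero x hxk h)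
    have hle : π x ≤ L := hmem.1 x hx1' hx2'
    exact Finset.mem_Icc.mpr ⟨by omega, hle⟩
  rw [Finset.card_eq_sum_card_fiberwise hmemL]
  apply Finset.sum_congr rfl
  intro c hc
  rcases Finset.mem_Icc.mp hc with ⟨hc1, hcL⟩
  rw [← fiber_count hmem hcL hv]
  congr 1
  ext i
  simp only [Finset.mem_filter, Finset.mem_erase, Finset.mem_Icc]
  constructor
  · rintro ⟨⟨⟨hij, hik⟩, hrel⟩, hc'⟩
    exact ⟨hik, hc', hrel⟩
  · rintro ⟨hik, hc', hrel⟩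
    have hij : i ≠ j := by
      intro h
      rw [h, hπ0] at hc'
      omega
    exact ⟨⟨⟨hij, hik⟩, hrel⟩, hc'⟩

end Helpers2
section Helpers3

lemma dist_ineq {L R k : ℕ} {s : ℕ → ℕ} (hR : 2 ≤ R) (hk : 2 ≤ k)
    (hs : IsDist L R k s) (hs0 : s 0 = 1) (hk1LR : k - 1 ≤ L * R)
    {w : ℕ} (hw1 : 1 ≤ w) (hwR : w < R) :
    ∑ c ∈ Finset.Icc 1 L, (s c - w) ≤ ∑ c ∈ Finset.Icc 1 L, (sStar1 R k c - w) := by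
  classical
  obtain ⟨L', r, hdm, hrR, hL'def, hrdef⟩ :
      ∃ L' r, R * L' + r = k - 1 ∧ r < R ∧ L' = (k - 1) / R ∧ r = (k - 1) % R :=
    ⟨_, _, Nat.div_add_mod _ _, Nat.mod_lt _ (by omega), rfl, rfl⟩
  have hcomm : L' * R = R * L' := Nat.mul_comm _ _
  have hcommL : L * R = R * L := Nat.mul_comm _ _
  have hL'L : L' ≤ L := by
    have h := Nat.div_le_div_right (c := R) hk1LR
    rw [Nat.mul_div_cancel _ (by omega : 0 < R)] at h
    omega
  have hsum1 : ∑ c ∈ Finset.Icc 1 L, s c = k - 1 := by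
    have hins : Finset.range (L + 1) = insert 0 (Finset.Icc 1 L) := by
      ext x
      simp only [Finset.mem_range, Finset.mem_insert, Finset.mem_Icc]
      omega
    have h0 : (0 : ℕ) ∉ Finset.Icc 1 L := by simp
    have h := hs.2.2
    rw [hins, Finset.sum_insert h0, hs0] at h
    omega
  have hLr : L' = L → r = 0 := by
    intro h
    rw [h] at hdm
    omega
  have hRHS : ∑ c ∈ Finset.Icc 1 L, (sStar1 R k c - w) = L' * (R - w) + (r - w) := by
    rw [← Finset.sum_filter_add_sum_filter_not (Finset.Icc 1 L) (fun c => c ≤ L')]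
    have e1 : (Finset.Icc 1 L).filter (fun c => c ≤ L') = Finset.Icc 1 L' := by
      ext x
      simp only [Finset.mem_filter, Finset.mem_Icc]
      omega
    have e2 : (Finset.Icc 1 L).filter (fun c => ¬ c ≤ L') = Finset.Icc (L' + 1) L := by
      ext x
      simp only [Finset.mem_filter, Finset.mem_Icc]
      omega
    rw [e1, e2]
    have t1 : ∑ c ∈ Finset.Icc 1 L', (sStar1 R k c - w) = L' * (R - w) := by
      have hcongr : ∀ c ∈ Finset.Icc 1 L', sStar1 R k c - w = R - w := by
        intro c hc
        rcases Finset.mem_Icc.mp hc with ⟨hc1, hc2⟩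
        unfold sStar1
        rw [if_neg (by omega), if_pos (by omega)]
      rw [Finset.sum_congr rfl hcongr, Finset.sum_const, Nat.card_Icc, smul_eq_mul,
        Nat.succ_sub_one]
    have t2 : ∑ c ∈ Finset.Icc (L' + 1) L, (sStar1 R k c - w) = r - w := by
      have step : ∀ c ∈ Finset.Icc (L' + 1) L,
          sStar1 R k c - w = if c = L' + 1 then r - w else 0 := by
        intro c hc
        rcases Finset.mem_Icc.mp hc with ⟨hc1, hc2⟩
        unfold sStar1
        rw [if_neg (by omega), if_neg (by omega)]
        by_cases h : c = L' + 1
        · rw [if_pos (by omega), if_pos h]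
          have hx : k - 1 - (k - 1) / R * R = r := by
            have h2 : (k - 1) / R * R = R * L' := by rw [← hL'def]; exact hcomm
            omega
          rw [hx]
        · rw [if_neg (by omega), if_neg h]
          omega
      rw [Finset.sum_congr rfl step, Finset.sum_ite_eq' _ (L' + 1) (fun _ => r - w)]
      by_cases h : L' + 1 ≤ L
      · rw [if_pos (Finset.mem_Icc.mpr ⟨le_refl _, h⟩)]
      · rw [if_neg (by rw [Finset.mem_Icc]; omega)]
        have h2 : L' = L := by omega
        have := hLr h2
        omega
    rw [t1, t2]
  rw [hRHS]
  set Sq := (Finset.Icc 1 L).filter (fun c => w ≤ s c) with hSq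
  have hqL : Sq.card ≤ L := by
    calc Sq.card ≤ (Finset.Icc 1 L).card := Finset.card_le_card (Finset.filter_subset _ _)
      _ = L := by rw [Nat.card_Icc]; omega
  set q := Sq.card with hq
  have hmono : ∀ b, b ≤ L → ∀ a, 1 ≤ a → a ≤ b → s b ≤ s a := by
    intro b
    induction b with
    | zero => intro _ a ha hab; exact absurd hab (by omega)
    | succ n ih =>
      intro hbL a ha hab
      rcases Nat.eq_or_lt_of_le hab with h | h
      · rw [h]
      · exact le_trans (hs.1 n (by omega) hbL) (ih (by omega) a ha (by omega))
  have hSqIcc : Finset.Icc 1 q = Sq := by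
    apply Finset.eq_of_subset_of_card_le
    · intro c hc
      rcases Finset.mem_Icc.mp hc with ⟨hc1, hc2⟩
      by_contra hcn
      have hsw : s c < w := by
        by_contra hsw
        exact hcn (Finset.mem_filter.mpr ⟨Finset.mem_Icc.mpr ⟨hc1, by omega⟩, by omega⟩)
      have hsub : Sq ⊆ Finset.Icc 1 (c - 1) := by
        intro x hx
        rcases Finset.mem_filter.mp hx with ⟨hx1, hx2⟩
        rcases Finset.mem_Icc.mp hx1 with ⟨hx3, hx4⟩
        rw [Finset.mem_Icc]
        refine ⟨hx3, ?_⟩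
        by_contra hxc
        have hcx : c ≤ x := by omega
        have : s x ≤ s c := hmono x hx4 c hc1 hcx
        omega
      have := Finset.card_le_card hsub
      rw [Nat.card_Icc] at this
      omega
    · rw [Nat.card_Icc]
      omega
  have hLHS : ∑ c ∈ Finset.Icc 1 L, (s c - w) = ∑ c ∈ Finset.Icc 1 q, (s c - w) := by
    rw [hSqIcc, hSq]
    rw [Finset.sum_filter_of_ne]
    intro x hx hne
    by_contra h
    exact hne (by omega)
  rw [hLHS]
  rcases Nat.lt_or_ge q (L' + 1) with hq1 | hq2
  · -- q ≤ L'
    have hbound : ∀ c ∈ Finset.Icc 1 q, s c - w ≤ R - w := by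
      intro c hc
      rcases Finset.mem_Icc.mp hc with ⟨hc1, hc2⟩
      have := hs.2.1 c hc1 (by omega)
      omega
    calc ∑ c ∈ Finset.Icc 1 q, (s c - w) ≤ (Finset.Icc 1 q).card • (R - w) :=
          Finset.sum_le_card_nsmul _ _ _ hbound
      _ = q * (R - w) := by rw [Nat.card_Icc, smul_eq_mul, Nat.succ_sub_one]
      _ ≤ L' * (R - w) := Nat.mul_le_mul_right _ (by omega)
      _ ≤ L' * (R - w) + (r - w) := Nat.le_add_right _ _
  · -- q ≥ L' + 1
    have hsplit : ∑ c ∈ Finset.Icc 1 q, ((s c - w) + w) = ∑ c ∈ Finset.Icc 1 q, s c := by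
      apply Finset.sum_congr rfl
      intro c hc
      have hcSq : c ∈ Sq := hSqIcc ▸ hc
      have := (Finset.mem_filter.mp hcSq).2
      omega
    rw [Finset.sum_add_distrib, Finset.sum_const, Nat.card_Icc, smul_eq_mul,
      Nat.succ_sub_one] at hsplit
    have hsubsum : ∑ c ∈ Finset.Icc 1 q, s c ≤ k - 1 := by
      rw [← hsum1]
      apply Finset.sum_le_sum_of_subset
      exact Finset.Icc_subset_Icc_right (by omega)
    have hqw : L' * w + w ≤ q * w := by
      have h := Nat.mul_le_mul_right w hq2
      rw [Nat.succ_mul] at h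
      exact h
    have hsplitR : L' * (R - w) + L' * w = L' * R := by
      rw [← Nat.left_distrib, Nat.sub_add_cancel (le_of_lt hwR)]
    omega

end Helpers3
section Helpers4

noncomputable def Wr (dI dC : ℕ) (βI βC : ℝ) (i h : ℕ) : ℝ :=
  ((dI + 1 - h : ℕ) : ℝ) * βI + ((dC - (i - h) : ℕ) : ℝ) * βC

noncomputable def Fr (dI dC : ℕ) (βI βC α : ℝ) (i h : ℕ) : ℝ :=
  min α (Wr dI dC βI βC i h)

noncomputable def Dr (dI dC : ℕ) (βI βC α : ℝ) (i v : ℕ) : ℝ :=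
  Fr dI dC βI βC α i (v - 1) - Fr dI dC βI βC α i v

variable {dI dC : ℕ} {βI βC α : ℝ}

lemma Wr_le {v i : ℕ} (h2v : 2 ≤ v) (hvR : v ≤ dI + 1) (hβ : βC ≤ βI) (hβC : 0 ≤ βC) :
    Wr dI dC βI βC i v ≤ Wr dI dC βI βC i (v - 1) := by
  have na : dI + 1 - (v - 1) = (dI + 1 - v) + 1 := by omega
  have nb : dC - (i - v) ≤ (dC - (i - (v - 1))) + 1 := by omega
  have na' : ((dI + 1 - (v - 1) : ℕ) : ℝ) = ((dI + 1 - v : ℕ) : ℝ) + 1 := by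
    rw [na]; push_cast; ring
  have nb' : ((dC - (i - v) : ℕ) : ℝ) ≤ ((dC - (i - (v - 1)) : ℕ) : ℝ) + 1 := by
    exact_mod_cast nb
  have nb2 : ((dC - (i - (v - 1)) : ℕ) : ℝ) ≤ ((dC - (i - v) : ℕ) : ℝ) := by
    exact_mod_cast (show dC - (i - (v - 1)) ≤ dC - (i - v) by omega)
  unfold Wr
  rw [na']
  nlinarith [nb', nb2]

lemma Wr_anti {h i i' : ℕ} (hii' : i ≤ i') (hβC : 0 ≤ βC) :
    Wr dI dC βI βC i' h ≤ Wr dI dC βI βC i h := by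
  unfold Wr
  apply add_le_add le_rfl
  apply mul_le_mul_of_nonneg_right _ hβC
  exact_mod_cast (show dC - (i' - h) ≤ dC - (i - h) by omega)

lemma Dr_nonneg {v i : ℕ} (h2v : 2 ≤ v) (hvR : v ≤ dI + 1) (hβ : βC ≤ βI) (hβC : 0 ≤ βC) :
    0 ≤ Dr dI dC βI βC α i v := by
  unfold Dr Fr
  have := min_le_min (le_refl α) (Wr_le (dC := dC) (i := i) h2v hvR hβ hβC)
  linarith

lemma Dr_mono {v i i' : ℕ} (h2v : 2 ≤ v) (hvR : v ≤ dI + 1) (hvi : v ≤ i) (hii' : i ≤ i')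
    (hβ : βC ≤ βI) (hβC : 0 ≤ βC) :
    Dr dI dC βI βC α i v ≤ Dr dI dC βI βC α i' v := by
  unfold Dr Fr
  apply cap_lemma (Wr_le h2v hvR hβ hβC) (Wr_le h2v hvR hβ hβC) (Wr_anti hii' hβC)
  -- diff : Wr i (v-1) - Wr i v ≤ Wr i' (v-1) - Wr i' v
  have hnat : dC - (i - (v - 1)) + (dC - (i' - v)) ≤ dC - (i - v) + (dC - (i' - (v - 1))) := by
    omega
  have hcast : ((dC - (i - (v - 1)) : ℕ) : ℝ) + ((dC - (i' - v) : ℕ) : ℝ)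
      ≤ ((dC - (i - v) : ℕ) : ℝ) + ((dC - (i' - (v - 1)) : ℕ) : ℝ) := by
    exact_mod_cast hnat
  unfold Wr
  nlinarith [hcast]

end Helpers4
section MainHelpers

lemma MC_decomp (L R k dI dC : ℕ) (βI βC α : ℝ) (j : ℕ) (hjmem : j ∈ Finset.Icc 1 k)
    (t σ : ℕ → ℕ) (hmem : MemPi L k t σ) (hσ0 : σ j = 0) (ht0 : t 0 = 1)
    (htR : ∀ c, 1 ≤ c → c ≤ L → t c ≤ R) :
    MC k dI dC βI βC α σ =
      min α (((dI + dC + 1 - j : ℕ) : ℝ) * βC)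
      + ((∑ i ∈ (Finset.Icc 1 k).erase j, Fr dI dC βI βC α i 1)
      - ∑ v ∈ Finset.Icc 2 R, ∑ i ∈ ((Finset.Icc 1 k).erase j).filter
          (fun i => v ≤ relLoc σ i), Dr dI dC βI βC α i v) := by
  classical
  have hz := zero_only hmem ht0 hjmem hσ0
  unfold MC
  rw [← Finset.add_sum_erase _ _ hjmem]
  congr 1
  · congr 1
    unfold weight
    rw [if_pos hσ0]
  · have hstep1 : ∀ i ∈ (Finset.Icc 1 k).erase j,
        min α (weight dI dC βI βC σ i) = Fr dI dC βI βC α i (relLoc σ i) := by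
      intro i hi
      have hij : i ≠ j := Finset.ne_of_mem_erase hi
      have hik : i ∈ Finset.Icc 1 k := Finset.mem_of_mem_erase hi
      have hne : σ i ≠ 0 := fun h => hij (hz i hik h)
      unfold Fr Wr weight aCoef bCoef
      rw [if_neg hne]
    rw [Finset.sum_congr rfl hstep1]
    have hstep2 : ∀ i ∈ (Finset.Icc 1 k).erase j,
        Fr dI dC βI βC α i (relLoc σ i) = Fr dI dC βI βC α i 1
          - ∑ v ∈ Finset.Icc 2 R, (if v ≤ relLoc σ i then Dr dI dC βI βC α i v else 0) := by
      intro i hi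
      have hij : i ≠ j := Finset.ne_of_mem_erase hi
      have hik : i ∈ Finset.Icc 1 k := Finset.mem_of_mem_erase hi
      rcases Finset.mem_Icc.mp hik with ⟨hi1, hik'⟩
      have hne : σ i ≠ 0 := fun h => hij (hz i hik h)
      have h1 : 1 ≤ relLoc σ i := relLoc_pos σ i hi1
      have hσiL : σ i ≤ L := hmem.1 i hi1 hik'
      have hR' : relLoc σ i ≤ R := by
        calc relLoc σ i ≤ ((Finset.Icc 1 k).filter (fun x => σ x = σ i)).card :=
              relLoc_le_count σ hik'
          _ = t (σ i) := hmem.2 (σ i) hσiL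
          _ ≤ R := htR (σ i) (by omega) hσiL
      have e : (Finset.Icc 2 R).filter (fun v => v ≤ relLoc σ i)
          = Finset.Icc 2 (relLoc σ i) := by
        ext x
        simp only [Finset.mem_filter, Finset.mem_Icc]
        omega
      have tele := telescope (Fr dI dC βI βC α i) (relLoc σ i) h1
      have hsum : ∑ v ∈ Finset.Icc 2 R, (if v ≤ relLoc σ i then Dr dI dC βI βC α i v else 0)
          = Fr dI dC βI βC α i 1 - Fr dI dC βI βC α i (relLoc σ i) := by
        rw [← Finset.sum_filter, e, ← tele]
        exact Finset.sum_congr rfl (fun v _ => rfl)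
      rw [hsum]
      ring
    rw [Finset.sum_congr rfl hstep2, Finset.sum_sub_distrib]
    congr 1
    rw [Finset.sum_comm]
    apply Finset.sum_congr rfl
    intro v _
    rw [Finset.sum_filter]

end MainHelpers

/-- with one separate selected node fixed at location `j`, the cluster order
`π^(j)` produced by Algorithms 1 and 2 minimizes the min-cut among all cluster orders in
`Π(s)` (with `s_0 = 1`) whose separate entry is at position `j`. -/
theorem stmt4 (L R k dI dC : ℕ) (βI βC α : ℝ)
    (hL : 1 ≤ L) (hR : 2 ≤ R) (hk : 2 ≤ k)
    (hdI : dI = R - 1) (hdC : 1 ≤ dC) (hkd : k ≤ dI + dC)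
    (hβ : βC ≤ βI) (hβC : 0 < βC) (hα : 0 < α)
    (hk1LR : k - 1 ≤ L * R)
    (j : ℕ) (hj1 : 1 ≤ j) (hjk : j ≤ k)
    (πj : ℕ → ℕ) (hπj : IsPiJ L R k j πj)
    (s : ℕ → ℕ) (hs : IsDist L R k s) (hs0 : s 0 = 1)
    (π : ℕ → ℕ) (hπ : MemPi L k s π) (hπ0 : π j = 0) :
    MC k dI dC βI βC α πj ≤ MC k dI dC βI βC α π := by
  classical
  obtain ⟨hπj0, hπjmem, hπjord⟩ := hπj
  have hjmem : j ∈ Finset.Icc 1 k := Finset.mem_Icc.mpr ⟨hj1, hjk⟩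
  have hRdI : dI + 1 = R := by omega
  have hss10 : sStar1 R k 0 = 1 := by unfold sStar1; rw [if_pos rfl]
  have hss1R : ∀ c, 1 ≤ c → c ≤ L → sStar1 R k c ≤ R := by
    intro c hc1 hc2
    unfold sStar1
    rw [if_neg (by omega)]
    split_ifs with h1 h2
    · exact le_refl R
    · have hdm := Nat.div_add_mod (k - 1) R
      have hco : (k - 1) / R * R = R * ((k - 1) / R) := Nat.mul_comm _ _
      have := Nat.mod_lt (k - 1) (show 0 < R by omega)
      omega
    · omega
  have hzπj := zero_only hπjmem hss10 hjmem hπj0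
  rw [MC_decomp L R k dI dC βI βC α j hjmem s π hπ hπ0 hs0 hs.2.1,
    MC_decomp L R k dI dC βI βC α j hjmem (sStar1 R k) πj hπjmem hπj0 hss10 hss1R]
  have hper : ∀ v ∈ Finset.Icc 2 R,
      ∑ i ∈ ((Finset.Icc 1 k).erase j).filter (fun i => v ≤ relLoc π i),
        Dr dI dC βI βC α i v
      ≤ ∑ i ∈ ((Finset.Icc 1 k).erase j).filter (fun i => v ≤ relLoc πj i),
        Dr dI dC βI βC α i v := by
    intro v hv
    rcases Finset.mem_Icc.mp hv with ⟨hv2, hvR⟩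
    have hv1 : 1 ≤ v := by omega
    apply sum_big
    · -- cardinalities
      rw [countA hπ hs0 hjmem hπ0 hv1, countA hπjmem hss10 hjmem hπj0 hv1]
      have hd := dist_ineq (s := s) hR hk hs hs0 hk1LR
        (w := v - 1) (by omega) (by omega)
      calc ∑ c ∈ Finset.Icc 1 L, (s c + 1 - v)
          = ∑ c ∈ Finset.Icc 1 L, (s c - (v - 1)) :=
            Finset.sum_congr rfl (fun c _ => by omega)
        _ ≤ ∑ c ∈ Finset.Icc 1 L, (sStar1 R k c - (v - 1)) := hd
        _ = ∑ c ∈ Finset.Icc 1 L, (sStar1 R k c + 1 - v) :=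
            Finset.sum_congr rfl (fun c _ => by omega)
    · intro u hu
      exact Dr_nonneg hv2 (by omega) hβ (le_of_lt hβC)
    · intro b hb hbU u hu huB
      rcases Finset.mem_filter.mp hb with ⟨hbA, hbrel⟩
      rcases Finset.mem_filter.mp hu with ⟨huA, hurel⟩
      have hbj : b ≠ j := Finset.ne_of_mem_erase hbA
      have huj : u ≠ j := Finset.ne_of_mem_erase huA
      have hbk := Finset.mem_Icc.mp (Finset.mem_of_mem_erase hbA)
      have huk := Finset.mem_Icc.mp (Finset.mem_of_mem_erase huA)
      have hbne : πj b ≠ 0 := fun h => hbj (hzπj b (Finset.mem_of_mem_erase hbA) h)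
      have hune : πj u ≠ 0 := fun h => huj (hzπj u (Finset.mem_of_mem_erase huA) h)
      have hblt : b < u := by
        rcases Nat.lt_trichotomy b u with h | h | h
        · exact h
        · exact absurd (h ▸ hu) hbU
        · exfalso
          have := (hπjord u b huk.1 h hbk.2 hune hbne).1
          have hbU' : b ∈ ((Finset.Icc 1 k).erase j).filter (fun i => v ≤ relLoc πj i) :=
            Finset.mem_filter.mpr ⟨hbA, by omega⟩
          exact hbU hbU'
      have hvb : v ≤ b := le_trans hbrel (relLoc_le_self π b)
      exact Dr_mono hv2 (by omega) hvb (le_of_lt hblt) hβ (le_of_lt hβC)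
  have hsum := Finset.sum_le_sum hper
  linarith
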